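/- Let n be an even positive integer and let F be a field with char(F) ≠ 2 and |F| ≥ n² + 1. If a, b ∈ Q_n satisfy det(a + x) = det(b + x) for all x ∈ Q_n, then a = b. -/

import Mathlib

open Matrix

/-- The `F`-submodule of skew-symmetric `n × n` matrices over `F` (the space `Q_n`). -/
def skewSubmodule (F : Type*) [Field F] (n : ℕ) :
    Submodule F (Matrix (Fin n) (Fin n) F) where
  carrier := {a | aᵀ = -a}
  add_mem' := by
    intro a b ha hb
    simp only [Set.mem_setOf_eq] at *
    rw [Matrix.transpose_add, ha, hb, neg_add]
  zero_mem' := by simp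
  smul_mem' := by
    intro c a ha
    simp only [Set.mem_setOf_eq] at *
    rw [Matrix.transpose_smul, ha, smul_neg]

namespace SkewDetAux

open Polynomial

variable {F : Type*} [Field F] {n : ℕ}

lemma skew_inv {x : Matrix (Fin n) (Fin n) F} (hx : xᵀ = -x) (hu : IsUnit x.det) :
    (x⁻¹)ᵀ = -x⁻¹ := by
  rw [Matrix.transpose_nonsing_inv, hx]
  exact Matrix.inv_eq_right_inv (by rw [neg_mul_neg, Matrix.mul_nonsing_inv _ hu])

lemma trace_std_mul (i j : Fin n) (c : Matrix (Fin n) (Fin n) F) :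
    Matrix.trace (Matrix.single i j 1 * c) = c j i := by
  simp [Matrix.trace, Matrix.diag, Matrix.mul_apply, Matrix.single, ite_and,
    Finset.sum_ite_eq]

lemma eq_zero_of_trace (hchar : ringChar F ≠ 2) {c : Matrix (Fin n) (Fin n) F}
    (hc : cᵀ = -c)
    (ht : ∀ z : Matrix (Fin n) (Fin n) F, zᵀ = -z → Matrix.trace (z * c) = 0) :
    c = 0 := by
  have h2 : (2 : F) ≠ 0 := Ring.two_ne_zero hchar
  ext i j
  show c i j = 0
  rcases eq_or_ne i j with rfl | hij
  · have h1 : c i i = -c i i := by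
      have := congrFun (congrFun hc i) i; simpa using this
    have : (2 : F) * c i i = 0 := by linear_combination h1
    exact (mul_eq_zero.mp this).resolve_left h2
  · have hz : (Matrix.single i j (1:F) - Matrix.single j i 1)ᵀ
        = -(Matrix.single i j (1:F) - Matrix.single j i 1) := by
      ext a b
      simp only [Matrix.transpose_apply, Matrix.sub_apply, Matrix.neg_apply,
        Matrix.single, Matrix.of_apply]
      aesop
    have h0 := ht _ hz
    rw [sub_mul, Matrix.trace_sub, trace_std_mul, trace_std_mul] at h0
    have hji : c j i = -c i j := by
      have := congrFun (congrFun hc i) j; simpa using this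
    have : (2 : F) * c i j = 0 := by linear_combination hji - h0
    exact (mul_eq_zero.mp this).resolve_left h2

lemma exists_invertible_skew (hneven : Even n) :
    ∃ J : Matrix (Fin n) (Fin n) F, Jᵀ = -J ∧ IsUnit J.det := by
  obtain ⟨m, hm⟩ := hneven
  let e : (Fin m ⊕ Fin m) ≃ Fin n := finSumFinEquiv.trans (finCongr hm.symm)
  let J₀ : Matrix (Fin m ⊕ Fin m) (Fin m ⊕ Fin m) F := fromBlocks 0 1 (-1) 0
  have hmul : J₀ * fromBlocks 0 (-1) 1 0 = 1 := by
    simp [J₀, Matrix.fromBlocks_multiply, ← Matrix.fromBlocks_one]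
  refine ⟨Matrix.reindex e e J₀, ?_, ?_⟩
  · rw [Matrix.transpose_reindex]
    have : J₀ᵀ = -J₀ := by
      simp [J₀, Matrix.fromBlocks_transpose, Matrix.fromBlocks_neg]
    rw [this]
    rfl
  · rw [Matrix.det_reindex_self]
    exact Matrix.isUnit_det_of_right_inverse hmul

lemma detX_eq_charpoly (m : Matrix (Fin n) (Fin n) F) :
    ((X : F[X]) • (1 : Matrix (Fin n) (Fin n) F[X]) + m.map C).det
      = Matrix.charpoly (-m) := by
  unfold Matrix.charpoly
  congr 1
  refine Matrix.ext fun i j => ?_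
  rcases eq_or_ne i j with rfl | hij
  · simp [Matrix.charmatrix_apply_eq, Matrix.one_apply, sub_neg_eq_add]
  · simp [Matrix.charmatrix_apply_ne _ _ _ hij, Matrix.one_apply_ne hij]

lemma eval_detX (m : Matrix (Fin n) (Fin n) F) (t : F) :
    eval t (((X : F[X]) • (1 : Matrix (Fin n) (Fin n) F[X]) + m.map C).det)
      = (t • (1 : Matrix (Fin n) (Fin n) F) + m).det := by
  have h1 : eval t (((X : F[X]) • (1 : Matrix (Fin n) (Fin n) F[X]) + m.map C).det)
      = (((X : F[X]) • (1 : Matrix (Fin n) (Fin n) F[X]) + m.map C).map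
        (evalRingHom t)).det := by
    rw [← Polynomial.coe_evalRingHom, RingHom.map_det, RingHom.mapMatrix_apply]
  have h2 : ((X : F[X]) • (1 : Matrix (Fin n) (Fin n) F[X]) + m.map C).map (evalRingHom t)
      = t • 1 + m := by
    ext i j
    simp [Matrix.map_apply, Matrix.one_apply, apply_ite]
  rw [h1, h2]

lemma trace_inv_mul_eq_zero (hn : 0 < n) (hcard : (n ^ 2 + 1 : Cardinal) ≤ Cardinal.mk F)
    {c : Matrix (Fin n) (Fin n) F}
    (hdet : ∀ x : Matrix (Fin n) (Fin n) F, xᵀ = -x → (c + x).det = x.det)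
    {x : Matrix (Fin n) (Fin n) F} (hx : xᵀ = -x) (hu : IsUnit x.det) :
    Matrix.trace (x⁻¹ * c) = 0 := by
  set m := x⁻¹ * c with hm
  set p : F[X] := ((X : F[X]) • (1 : Matrix (Fin n) (Fin n) F[X]) + m.map C).det with hpdef
  have hp_char : p = Matrix.charpoly (-m) := detX_eq_charpoly m
  have heval : ∀ t : F, eval t p = t ^ n := by
    intro t
    have h3 : x * (t • (1 : Matrix (Fin n) (Fin n) F) + m) = c + t • x := by
      rw [mul_add, mul_smul_comm, mul_one, hm, ← mul_assoc, Matrix.mul_nonsing_inv _ hu,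
        one_mul, add_comm]
    have h4 : x.det * (t • (1 : Matrix (Fin n) (Fin n) F) + m).det = x.det * t ^ n := by
      rw [← Matrix.det_mul, h3, hdet (t • x) (by rw [Matrix.transpose_smul, hx, smul_neg]),
        Matrix.det_smul, Fintype.card_fin]
      ring
    rw [hpdef, eval_detX]
    exact mul_left_cancel₀ hu.ne_zero h4
  have hdeg : p.natDegree ≤ n := by
    have := Polynomial.natDegree_det_X_add_C_le (1 : Matrix (Fin n) (Fin n) F) m
    rwa [Matrix.map_one _ (map_zero C) (map_one C), Fintype.card_fin] at this
  have hq : p - X ^ n = 0 := by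
    apply Polynomial.eq_zero_of_forall_eval_zero_of_natDegree_lt_card
    · intro t; simp [heval t]
    · have hd : (p - X ^ n).natDegree ≤ n :=
        le_trans (natDegree_sub_le _ _) (by simp [hdeg, natDegree_X_pow])
      calc ((p - X ^ n).natDegree : Cardinal) ≤ (n : Cardinal) := Nat.cast_le.2 hd
        _ < (n ^ 2 + 1 : Cardinal) := by
            have : ((n : ℕ) : Cardinal) < ((n ^ 2 + 1 : ℕ) : Cardinal) :=
              Nat.cast_lt.2 (Nat.lt_succ_of_le (Nat.le_self_pow two_ne_zero n))
            simpa [Nat.cast_pow] using this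
        _ ≤ Cardinal.mk F := hcard
  have hcp : Matrix.charpoly (-m) = X ^ n := by rw [← hp_char, ← sub_eq_zero]; exact hq
  haveI : Nonempty (Fin n) := ⟨⟨0, hn⟩⟩
  have htr := Matrix.trace_eq_neg_charpoly_coeff (-m)
  rw [hcp, Fintype.card_fin, Matrix.trace_neg, coeff_X_pow, if_neg (by omega)] at htr
  simpa using htr

lemma trace_mul_eq_zero (hn : 0 < n) (hneven : Even n)
    (hcard : (n ^ 2 + 1 : Cardinal) ≤ Cardinal.mk F)
    {c : Matrix (Fin n) (Fin n) F}
    (hdet : ∀ x : Matrix (Fin n) (Fin n) F, xᵀ = -x → (c + x).det = x.det)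
    {z : Matrix (Fin n) (Fin n) F} (hz : zᵀ = -z) :
    Matrix.trace (z * c) = 0 := by
  have hn2 : 2 ≤ n := by obtain ⟨m, hm⟩ := hneven; omega
  -- step 1: the statement for invertible skew z
  have key : ∀ w : Matrix (Fin n) (Fin n) F, wᵀ = -w → IsUnit w.det →
      Matrix.trace (w * c) = 0 := by
    intro w hw hwu
    have h1 := trace_inv_mul_eq_zero hn hcard hdet (skew_inv hw hwu)
      (Matrix.isUnit_nonsing_inv_det w hwu)
    rwa [Matrix.nonsing_inv_nonsing_inv w hwu] at h1
  obtain ⟨J, hJ, hJu⟩ := exists_invertible_skew (F := F) hneven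
  -- step 2: find t ≠ 0 with z + t • J invertible
  obtain ⟨t, ht0, htu⟩ : ∃ t : F, t ≠ 0 ∧ (z + t • J).det ≠ 0 := by
    by_contra hcon
    push_neg at hcon
    set s : F[X] := X * ((X : F[X]) • (1 : Matrix (Fin n) (Fin n) F[X])
      + (J⁻¹ * z).map C).det with hs
    have hsch : s = X * Matrix.charpoly (-(J⁻¹ * z)) := by rw [hs, detX_eq_charpoly]
    have hsne : s ≠ 0 := by
      rw [hsch]
      exact mul_ne_zero X_ne_zero (Matrix.charpoly_monic _).ne_zero
    have hsdeg : s.natDegree = 1 + n := by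
      rw [hsch, natDegree_mul X_ne_zero (Matrix.charpoly_monic _).ne_zero, natDegree_X,
        Matrix.charpoly_natDegree_eq_dim, Fintype.card_fin]
    have hseval : ∀ t : F, eval t s = 0 := by
      intro t
      rcases eq_or_ne t 0 with rfl | htne
      · simp [hs]
      · have hd := hcon t htne
        have h3 : J * (t • (1 : Matrix (Fin n) (Fin n) F) + J⁻¹ * z) = z + t • J := by
          rw [mul_add, mul_smul_comm, mul_one, ← mul_assoc, Matrix.mul_nonsing_inv _ hJu,
            one_mul, add_comm]
        have h4 : J.det * (t • (1 : Matrix (Fin n) (Fin n) F) + J⁻¹ * z).det = 0 := by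
          rw [← Matrix.det_mul, h3, hd]
        have h5 : (t • (1 : Matrix (Fin n) (Fin n) F) + J⁻¹ * z).det = 0 :=
          (mul_eq_zero.mp h4).resolve_left hJu.ne_zero
        rw [hs, eval_mul, eval_X, eval_detX, h5, mul_zero]
    have : s = 0 := by
      apply Polynomial.eq_zero_of_forall_eval_zero_of_natDegree_lt_card _ hseval
      calc ((s.natDegree : ℕ) : Cardinal) = ((1 + n : ℕ) : Cardinal) := by rw [hsdeg]
        _ < ((n ^ 2 + 1 : ℕ) : Cardinal) := by
            refine Nat.cast_lt.2 ?_
            nlinarith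
        _ = (n ^ 2 + 1 : Cardinal) := by push_cast; ring
        _ ≤ Cardinal.mk F := hcard
    exact hsne this
  -- step 3: decompose z
  have hzsum : z = (z + t • J) - t • J := by abel
  have h1 : Matrix.trace ((z + t • J) * c) = 0 := by
    refine key _ ?_ (isUnit_iff_ne_zero.mpr htu)
    rw [Matrix.transpose_add, Matrix.transpose_smul, hz, hJ, smul_neg, neg_add]
  have h2 : Matrix.trace ((t • J) * c) = 0 := by
    refine key _ (by rw [Matrix.transpose_smul, hJ, smul_neg]) ?_
    rw [Matrix.det_smul]
    exact (IsUnit.pow _ (isUnit_iff_ne_zero.mpr ht0)).mul hJu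
  calc Matrix.trace (z * c) = Matrix.trace (((z + t • J) - t • J) * c) := by rw [← hzsum]
    _ = Matrix.trace ((z + t • J) * c) - Matrix.trace ((t • J) * c) := by
        rw [sub_mul, Matrix.trace_sub]
    _ = 0 := by rw [h1, h2, sub_zero]

end SkewDetAux

/-- **Lemma 4.** Let `n` be even and positive. If skew-symmetric matrices `a, b` satisfy
`det (a + x) = det (b + x)` for all skew-symmetric `x`, then `a = b`. -/
theorem skew_det_add_cancel
    {F : Type*} [Field F] {n : ℕ} (hn : 0 < n) (hneven : Even n)
    (hchar : ringChar F ≠ 2) (hcard : (n ^ 2 + 1 : Cardinal) ≤ Cardinal.mk F)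
    (a b : skewSubmodule F n)
    (h : ∀ x : skewSubmodule F n,
      ((a : Matrix (Fin n) (Fin n) F) + (x : Matrix (Fin n) (Fin n) F)).det
        = ((b : Matrix (Fin n) (Fin n) F) + (x : Matrix (Fin n) (Fin n) F)).det) :
    a = b := by
  have ha : (a : Matrix (Fin n) (Fin n) F)ᵀ = -(a : Matrix (Fin n) (Fin n) F) := a.2
  have hb : (b : Matrix (Fin n) (Fin n) F)ᵀ = -(b : Matrix (Fin n) (Fin n) F) := b.2
  set c : Matrix (Fin n) (Fin n) F := (b : Matrix (Fin n) (Fin n) F) - a with hc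
  have hcskew : cᵀ = -c := by
    rw [hc, Matrix.transpose_sub, ha, hb]
    abel
  have hdet : ∀ x : Matrix (Fin n) (Fin n) F, xᵀ = -x → (c + x).det = x.det := by
    intro x hx
    have hxa : x - (a : Matrix (Fin n) (Fin n) F) ∈ skewSubmodule F n := by
      have hx' : x ∈ skewSubmodule F n := hx
      exact Submodule.sub_mem _ hx' a.2
    have := h ⟨x - (a : Matrix (Fin n) (Fin n) F), hxa⟩
    simp only [Submodule.coe_mk] at this
    have hl : (a : Matrix (Fin n) (Fin n) F) + (x - a) = x := by abel
    have hr : (b : Matrix (Fin n) (Fin n) F) + (x - a) = c + x := by rw [hc]; abel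
    rw [hl, hr] at this
    exact this.symm
  have hc0 : c = 0 :=
    SkewDetAux.eq_zero_of_trace hchar hcskew fun z hz =>
      SkewDetAux.trace_mul_eq_zero hn hneven hcard hdet hz
  have : (a : Matrix (Fin n) (Fin n) F) = b := by
    have := sub_eq_zero.mp (hc.symm.trans hc0 :
      (b : Matrix (Fin n) (Fin n) F) - a = 0)
    exact this.symm
  exact Subtype.ext this
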